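/- For all C ≥ 0 there exists δ ≥ 0 with the following property. Let X be a geodesic metric space and let Y ⊆ X be a C-strongly contracting subset satisfying Gromov's 4-point condition with constant C. Then for any two points x, y ∈ X, the set Y ∪ {x, y} satisfies Gromov's 4-point condition with constant δ. -/

import Mathlib

universe u

/-- A metric space is *injective* (hyperconvex) if every family of closed balls that
pairwise intersect (i.e. `dist xᵢ xⱼ ≤ rᵢ + rⱼ` for `i ≠ j`) has a common point.
Families are encoded as sets of (center, radius) pairs. -/
def IsInjectiveSpace (X : Type u) [MetricSpace X] : Prop :=
  ∀ s : Set (X × ℝ), (∀ p ∈ s, 0 ≤ p.2) →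
    (∀ p ∈ s, ∀ q ∈ s, p ≠ q → dist p.1 q.1 ≤ p.2 + q.2) →
    ∃ z : X, ∀ p ∈ s, dist z p.1 ≤ p.2

/-- `γ : [0, dist x y] → X` is a geodesic from `x` to `y`. -/
def IsGeodesicSegment {X : Type u} [MetricSpace X] (γ : ℝ → X) (x y : X) : Prop :=
  γ 0 = x ∧ γ (dist x y) = y ∧
    ∀ s ∈ Set.Icc (0 : ℝ) (dist x y), ∀ t ∈ Set.Icc (0 : ℝ) (dist x y),
      dist (γ s) (γ t) = |s - t|

/-- A metric space is geodesic if any two points are joined by a geodesic. -/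
def IsGeodesicSpace (X : Type u) [MetricSpace X] : Prop :=
  ∀ x y : X, ∃ γ : ℝ → X, IsGeodesicSegment γ x y

/-- `γ` restricted to `I ⊆ ℝ` is a `(k, c)`-quasi-geodesic. -/
def IsQuasiGeodesicOn {X : Type u} [MetricSpace X] (k c : ℝ) (γ : ℝ → X) (I : Set ℝ) : Prop :=
  ∀ s ∈ I, ∀ t ∈ I,
    (1 / k) * |s - t| - c ≤ dist (γ s) (γ t) ∧ dist (γ s) (γ t) ≤ k * |s - t| + c

/-- A subset `Y` is `M`-Morse if every `(k, c)`-quasi-geodesic with endpoints on `Y`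
stays in the `M k c`-neighborhood of `Y`. -/
def IsMorse {X : Type u} [MetricSpace X] (M : ℝ → ℝ → ℝ) (Y : Set X) : Prop :=
  ∀ k c : ℝ, 1 ≤ k → 0 ≤ c → ∀ a b : ℝ, ∀ γ : ℝ → X,
    IsQuasiGeodesicOn k c γ (Set.Icc a b) → γ a ∈ Y → γ b ∈ Y →
    ∀ t ∈ Set.Icc a b, Metric.infDist (γ t) Y ≤ M k c

/-- The coarse closest-point projection `π_Y(x) = {y ∈ Y : d(x,y) ≤ d(x,Y) + 1}`. -/
def coarseProj {X : Type u} [MetricSpace X] (Y : Set X) (x : X) : Set X :=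
  {y | y ∈ Y ∧ dist x y ≤ Metric.infDist x Y + 1}

/-- `Y` is `D`-strongly contracting: for every closed ball `B` disjoint from `Y`,
the projection `π_Y(B)` has diameter at most `D`. -/
def IsStronglyContracting {X : Type u} [MetricSpace X] (D : ℝ) (Y : Set X) : Prop :=
  ∀ (c : X) (r : ℝ), Disjoint (Metric.closedBall c r) Y →
    ∀ x₁ ∈ Metric.closedBall c r, ∀ x₂ ∈ Metric.closedBall c r,
      ∀ y₁ ∈ coarseProj Y x₁, ∀ y₂ ∈ coarseProj Y x₂, dist y₁ y₂ ≤ D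

/-- `γ : I → X` is an `(L; D; k, c)`-local strongly contracting quasi-geodesic:
every subsegment of length at most `L` is a `(k,c)`-quasi-geodesic with
`D`-strongly contracting image. -/
def IsLocalSCQuasiGeodesic {X : Type u} [MetricSpace X] (L D k c : ℝ) (γ : ℝ → X)
    (I : Set ℝ) : Prop :=
  ∀ s t : ℝ, s ≤ t → Set.Icc s t ⊆ I → t - s ≤ L →
    IsQuasiGeodesicOn k c γ (Set.Icc s t) ∧ IsStronglyContracting D (γ '' Set.Icc s t)

/-- `γ : I → X` is a `(B; M; k, c)`-local Morse quasi-geodesic. -/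
def IsLocalMorseQuasiGeodesic {X : Type u} [MetricSpace X] (B : ℝ) (M : ℝ → ℝ → ℝ)
    (k c : ℝ) (γ : ℝ → X) (I : Set ℝ) : Prop :=
  ∀ s t : ℝ, s ≤ t → Set.Icc s t ⊆ I → t - s ≤ B →
    IsQuasiGeodesicOn k c γ (Set.Icc s t) ∧ IsMorse M (γ '' Set.Icc s t)

/-- The Morse local-to-global property. -/
def HasMorseLocalToGlobal (X : Type u) [MetricSpace X] : Prop :=
  ∀ (M : ℝ → ℝ → ℝ) (k c : ℝ), 1 ≤ k → 0 ≤ c →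
    ∃ (B : ℝ) (M' : ℝ → ℝ → ℝ) (k' c' : ℝ), 0 ≤ B ∧ 1 ≤ k' ∧ 0 ≤ c' ∧
      ∀ I : Set ℝ, I.OrdConnected → ∀ γ : ℝ → X,
        IsLocalMorseQuasiGeodesic B M k c γ I →
        IsQuasiGeodesicOn k' c' γ I ∧ IsMorse M' (γ '' I)

/-- `A` satisfies Gromov's 4-point condition with constant `C`. -/
def Gromov4 {X : Type u} [MetricSpace X] (C : ℝ) (A : Set X) : Prop :=
  ∀ x ∈ A, ∀ y ∈ A, ∀ w ∈ A, ∀ z ∈ A,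
    dist x y + dist w z ≤ max (dist x z + dist w y) (dist x w + dist y z) + C


section H
variable {X : Type u} [MetricSpace X] {Y : Set X} {C : ℝ}

lemma ball_disjoint' {c : X} {r : ℝ} (h : r < Metric.infDist c Y) :
    Disjoint (Metric.closedBall c r) Y := by
  rw [Set.disjoint_left]
  intro a ha haY
  have h1 : Metric.infDist c Y ≤ dist c a := Metric.infDist_le_dist_of_mem haY
  have h2 : dist a c ≤ r := Metric.mem_closedBall.mp ha
  rw [dist_comm] at h2; linarith

lemma sc_pair (hSC : IsStronglyContracting C Y) {c : X} {r : ℝ}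
    (hr : r < Metric.infDist c Y) {x₁ x₂ y₁ y₂ : X}
    (h1 : dist c x₁ ≤ r) (h2 : dist c x₂ ≤ r)
    (hy1 : y₁ ∈ coarseProj Y x₁) (hy2 : y₂ ∈ coarseProj Y x₂) :
    dist y₁ y₂ ≤ C :=
  hSC c r (ball_disjoint' hr) x₁ (by rwa [Metric.mem_closedBall, dist_comm]) x₂
    (by rwa [Metric.mem_closedBall, dist_comm]) y₁ hy1 y₂ hy2

lemma proj_nonempty (hY : Y.Nonempty) (x : X) : (coarseProj Y x).Nonempty := by
  obtain ⟨y, hy, hlt⟩ := (Metric.infDist_lt_iff hY).mp (lt_add_one _)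
  exact ⟨y, hy, hlt.le⟩

/-- Lemma A: the projection formula for strongly contracting sets. -/
lemma lemA (hGeo : IsGeodesicSpace X) (hC : 0 ≤ C)
    (hSC : IsStronglyContracting C Y) :
    ∀ x x' y : X, x' ∈ coarseProj Y x → y ∈ Y →
      dist x x' + dist x' y ≤ dist x y + (2*C + 6) := by
  have key : ∀ n : ℕ, ∀ x x' y : X, x' ∈ coarseProj Y x → y ∈ Y →
      dist x x' + dist x' y ≤ dist x y + max (2*C+6) (2*dist x y + 2 - n) := by
    intro n
    induction n with
    | zero =>
      intro x x' y hx' hy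
      have h1 : dist x x' ≤ Metric.infDist x Y + 1 := hx'.2
      have h2 : Metric.infDist x Y ≤ dist x y := Metric.infDist_le_dist_of_mem hy
      have h3 : dist x' y ≤ dist x' x + dist x y := dist_triangle _ _ _
      have h4 : dist x' x = dist x x' := dist_comm _ _
      have h5 := le_max_right (2*C+6) (2*dist x y + 2 - ((0:ℕ):ℝ))
      push_cast at h5 ⊢
      linarith
    | succ n ih =>
      intro x x' y hx' hy
      by_cases hΔ : dist x x' + dist x' y ≤ dist x y + (2*C+6)
      · exact le_trans hΔ (by gcongr; exact le_max_left _ _)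
      push_neg at hΔ
      have hproj : dist x x' ≤ Metric.infDist x Y + 1 := hx'.2
      have hx'Y : x' ∈ Y := hx'.1
      have hinf : Metric.infDist x Y ≤ dist x y := Metric.infDist_le_dist_of_mem hy
      have hxx'2 : 2 ≤ dist x x' := by
        by_contra hlt
        push_neg at hlt
        have : dist x' y ≤ dist x' x + dist x y := dist_triangle _ _ _
        rw [dist_comm x' x] at this
        linarith
      set ℓ := dist x y with hℓ
      set ρ := dist x x' - 2 with hρ
      have hρ0 : 0 ≤ ρ := by simp [hρ]; linarith
      have hρℓ : ρ ≤ ℓ := by simp [hρ, hℓ]; linarith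
      obtain ⟨γ, hγ0, hγ1, hγd⟩ := hGeo x y
      set z := γ ρ with hz
      have hxz : dist x z = ρ := by
        have := hγd 0 ⟨le_refl _, dist_nonneg⟩ ρ ⟨hρ0, hρℓ⟩
        rw [hγ0] at this
        rw [← hz] at this
        rw [this]
        rw [abs_of_nonpos (by linarith)]; ring
      have hzy : dist z y = ℓ - ρ := by
        have := hγd ρ ⟨hρ0, hρℓ⟩ ℓ ⟨dist_nonneg, le_refl _⟩
        rw [hγ1] at this
        rw [← hz] at this
        rw [this, abs_of_nonpos (by linarith)]; ring
      obtain ⟨z', hz'⟩ := proj_nonempty ⟨y, hy⟩ z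
      have hC1 : dist x' z' ≤ C := by
        refine sc_pair hSC (r := ρ) (by linarith) (by simp [dist_self]; linarith) (le_of_eq hxz) hx' hz'
      have hIH := ih z z' y hz' hy
      -- triangle facts
      have t1 : dist x' y ≤ dist x' z + dist z y := dist_triangle _ _ _
      have t2 : dist x' z ≤ dist x' z' + dist z' z := dist_triangle _ _ _
      have t3 : dist x' y ≤ dist x' z' + dist z' y := dist_triangle _ _ _
      have e1 : dist x' z = dist z x' := dist_comm _ _
      have e2 : dist z' z = dist z z' := dist_comm _ _
      have e3 : dist z' y ≤ dist z' x' + dist x' y := dist_triangle _ _ _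
      have e4 : dist z' x' = dist x' z' := dist_comm _ _
      -- combine
      rcases le_or_gt (2*dist z y + 2 - (n:ℝ)) (2*C+6) with hM | hM
      · have hIH' : dist z z' + dist z' y ≤ dist z y + (2*C+6) := by
          have := max_le (le_refl (2*C+6)) hM
          calc dist z z' + dist z' y ≤ dist z y + max (2*C+6) (2*dist z y + 2 - (n:ℝ)) := hIH
            _ ≤ dist z y + (2*C+6) := by linarith [max_le (le_refl (2*C+6)) hM]
        -- derive contradiction-ish bound: Δ ≤ 2C+5 ≤ 2C+6
        have harm : dist z z' ≥ dist x' y - dist z y - C := by linarith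
        have harm2 : dist z' y ≥ dist x' y - C := by linarith
        have : dist x x' + dist x' y ≤ ℓ + (2*C+6) := by linarith [hzy]
        exact le_trans this (by gcongr; exact le_max_left _ _)
      · have hIH' : dist z z' + dist z' y ≤ dist z y + (2*dist z y + 2 - (n:ℝ)) := by
          calc dist z z' + dist z' y ≤ dist z y + max (2*C+6) (2*dist z y + 2 - (n:ℝ)) := hIH
            _ ≤ _ := by linarith [max_le hM.le (le_refl (2*dist z y + 2 - (n:ℝ)))]
        have harm : dist z z' ≥ dist x' y - dist z y - C := by linarith
        have harm2 : dist z' y ≥ dist x' y - C := by linarith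
        have hfin : dist x x' + dist x' y ≤ ℓ + (2*ℓ + 2 - ((n:ℝ)+1)) := by
          linarith [hzy]
        refine le_trans hfin ?_
        gcongr
        refine le_max_of_le_right ?_
        push_cast
        linarith
  intro x x' y hx' hy
  obtain ⟨n, hn⟩ := exists_nat_ge (2*dist x y + 2)
  have := key n x x' y hx' hy
  rwa [max_eq_left (by linarith)] at this

/-- Lemma J: if a geodesic stays `> 2C+4` away from `Y`, then the coarse
projections of its endpoints are close. -/
lemma lemJ (hC : 0 ≤ C) (hSC : IsStronglyContracting C Y) :
    ∀ n : ℕ, ∀ x y x' y' : X, ∀ γ : ℝ → X,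
      x' ∈ coarseProj Y x → y' ∈ coarseProj Y y → IsGeodesicSegment γ x y →
      (∀ t ∈ Set.Icc (0:ℝ) (dist x y), 2*C + 4 < Metric.infDist (γ t) Y) →
      dist x y ≤ n →
      dist x' y' ≤ 3*C +
        max 0 (dist x y - (Metric.infDist x Y - 1) - (Metric.infDist y Y - 1)) / 2 := by
  intro n
  induction n with
  | zero =>
    intro x y x' y' γ hx' hy' hγ hf hn
    have hxy : dist x y = 0 := le_antisymm (by exact_mod_cast hn) dist_nonneg
    have hxy' : x = y := by rwa [dist_eq_zero] at hxy
    subst hxy'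
    have hf0 : 2*C+4 < Metric.infDist x Y := by
      have := hf 0 ⟨le_refl _, dist_nonneg⟩
      rwa [hγ.1] at this
    have h := sc_pair hSC (c := x) (r := 0) (by linarith)
      (by simp [dist_self]) (by simp [dist_self]) hx' hy'
    have : (0:ℝ) ≤ max 0 (dist x x - (Metric.infDist x Y - 1) - (Metric.infDist x Y - 1)) :=
      le_max_left _ _
    linarith
  | succ n ih =>
    intro x y x' y' γ hx' hy' hγ hf hn
    obtain ⟨hγ0, hγ1, hγd⟩ := hγ
    set ℓ := dist x y with hℓdef
    have hℓ0 : 0 ≤ ℓ := dist_nonneg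
    set f0 := Metric.infDist x Y with hf0def
    set fl := Metric.infDist y Y with hfldef
    have hf0R : 2*C+4 < f0 := by
      have := hf 0 ⟨le_refl _, hℓ0⟩; rwa [hγ0] at this
    have hflR : 2*C+4 < fl := by
      have := hf ℓ ⟨hℓ0, le_refl _⟩; rwa [hγ1] at this
    have hmax0 : (0:ℝ) ≤ max 0 (ℓ - (f0 - 1) - (fl - 1)) := le_max_left _ _
    by_cases ha : ℓ ≤ f0 - 1
    · -- ball around x swallows y
      have h := sc_pair hSC (c := x) (r := f0 - 1) (by linarith)
        (by simp [dist_self]; linarith) (by exact ha) hx' hy'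
      linarith
    push_neg at ha
    by_cases hb : ℓ ≤ fl - 1
    · have h := sc_pair hSC (c := y) (r := fl - 1) (by linarith)
        (by rw [dist_comm]; exact hb) (by simp [dist_self]; linarith) hx' hy'
      linarith
    push_neg at hb
    -- hop point z = γ (f0 - 1)
    set h0 := f0 - 1 with hh0def
    have hh00 : 0 ≤ h0 := by simp [hh0def]; linarith
    have hh0ℓ : h0 ≤ ℓ := ha.le
    set z := γ h0 with hzdef
    have hxz : dist x z = h0 := by
      have := hγd 0 ⟨le_refl _, hℓ0⟩ h0 ⟨hh00, hh0ℓ⟩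
      rw [hγ0] at this
      rw [this, abs_of_nonpos (by linarith)]; ring
    have hzy : dist z y = ℓ - h0 := by
      have := hγd h0 ⟨hh00, hh0ℓ⟩ ℓ ⟨hℓ0, le_refl _⟩
      rw [hγ1] at this
      rw [this, abs_of_nonpos (by linarith)]; ring
    have hfz : 2*C+4 < Metric.infDist z Y := hf h0 ⟨hh00, hh0ℓ⟩
    obtain ⟨z', hz'⟩ := proj_nonempty ⟨y', hy'.1⟩ z
    have hxz' : dist x' z' ≤ C :=
      sc_pair hSC (c := x) (r := h0) (by linarith) (by simp [dist_self]; linarith)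
        (le_of_eq hxz) hx' hz'
    set S := ℓ - (f0 - 1) - (fl - 1) with hSdef
    by_cases hc1 : S ≤ 0
    · -- z is in the ball around y
      have hz'y' : dist z' y' ≤ C := by
        refine sc_pair hSC (c := y) (r := fl - 1) (by linarith) ?_
          (by simp [dist_self]; linarith) hz' hy'
        rw [dist_comm]
        rw [hzy]
        simp only [hSdef] at hc1
        linarith
      calc dist x' y' ≤ dist x' z' + dist z' y' := dist_triangle _ _ _
        _ ≤ 3*C + max 0 S / 2 := by linarith
    push_neg at hc1
    by_cases hc2 : S ≤ 2*C + 2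
    · -- middle point m = γ (h0 + S)
      set m := γ (h0 + S) with hmdef
      have hm1 : 0 ≤ h0 + S := by linarith
      have hm2 : h0 + S ≤ ℓ := by simp only [hSdef]; linarith
      have hzm : dist z m = S := by
        have := hγd h0 ⟨hh00, hh0ℓ⟩ (h0 + S) ⟨hm1, hm2⟩
        rw [this, abs_of_nonpos (by linarith)]; ring
      have hym : dist y m = fl - 1 := by
        have := hγd ℓ ⟨hℓ0, le_refl _⟩ (h0 + S) ⟨hm1, hm2⟩
        rw [hγ1] at this
        rw [this, abs_of_nonneg (by simp only [hSdef]; linarith)]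
        simp only [hSdef, hh0def]; ring
      obtain ⟨m', hm'⟩ := proj_nonempty ⟨y', hy'.1⟩ m
      have hz'm' : dist z' m' ≤ C :=
        sc_pair hSC (c := z) (r := S) (by linarith) (by simp [dist_self]; linarith)
          (le_of_eq hzm) hz' hm'
      have hm'y' : dist m' y' ≤ C :=
        sc_pair hSC (c := y) (r := fl - 1) (by linarith) (le_of_eq hym)
          (by simp [dist_self]; linarith) hm' hy'
      calc dist x' y' ≤ dist x' z' + dist z' y' := dist_triangle _ _ _
        _ ≤ dist x' z' + (dist z' m' + dist m' y') := by
              linarith [dist_triangle z' m' y']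
        _ ≤ 3*C + max 0 S / 2 := by linarith
    push_neg at hc2
    -- hop and use induction
    have hzyn : dist z y ≤ (n:ℝ) := by
      rw [hzy]
      push_cast at hn
      simp only [hh0def]
      linarith
    have hγ2 : IsGeodesicSegment (fun s => γ (s + h0)) z y := by
      refine ⟨by simp [hzdef], ?_, ?_⟩
      · simp only [hzy]
        have : ℓ - h0 + h0 = ℓ := by ring
        rw [this, hγ1]
      · intro s hs t ht
        rw [hzy] at hs ht
        have h1 : s + h0 ∈ Set.Icc (0:ℝ) ℓ := ⟨by linarith [hs.1], by linarith [hs.2]⟩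
        have h2 : t + h0 ∈ Set.Icc (0:ℝ) ℓ := ⟨by linarith [ht.1], by linarith [ht.2]⟩
        have := hγd (s + h0) h1 (t + h0) h2
        simpa using this
    have hf2 : ∀ t ∈ Set.Icc (0:ℝ) (dist z y), 2*C+4 < Metric.infDist ((fun s => γ (s + h0)) t) Y := by
      intro t ht
      rw [hzy] at ht
      exact hf (t + h0) ⟨by linarith [ht.1], by linarith [ht.2]⟩
    have hIH := ih z y z' y' (fun s => γ (s + h0)) hz' hy' hγ2 hf2 hzyn
    rw [hzy] at hIH
    -- infDist z Y = f_z
    set fz := Metric.infDist z Y with hfzdef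
    have harg : ℓ - h0 - (fz - 1) - (fl - 1) = S - (fz - 1) := by
      simp only [hSdef, hh0def]; ring
    rw [harg] at hIH
    have hmaxS : max 0 S = S := max_eq_right hc1.le
    have hfin : dist x' y' ≤ dist x' z' + dist z' y' := dist_triangle _ _ _
    rcases le_or_gt (S - (fz - 1)) 0 with hcase | hcase
    · rw [max_eq_left hcase] at hIH
      rw [hmaxS]
      linarith
    · rw [max_eq_right hcase.le] at hIH
      rw [hmaxS]
      linarith

/-- Lemma B: dichotomy for two arbitrary points. -/
lemma lemB (hGeo : IsGeodesicSpace X) (hC : 0 ≤ C) (hSC : IsStronglyContracting C Y) :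
    ∀ p q p' q' : X, p' ∈ coarseProj Y p → q' ∈ coarseProj Y q →
      dist p' q' ≤ 8*C + 22 ∨
      dist p p' + dist p' q' + dist q' q ≤ dist p q + (8*C + 22) := by
  intro p q p' q' hp' hq'
  obtain ⟨γ, hγ⟩ := hGeo p q
  set ℓ := dist p q with hℓdef
  have hℓ0 : 0 ≤ ℓ := dist_nonneg
  by_cases hf : ∀ t ∈ Set.Icc (0:ℝ) ℓ, 2*C + 4 < Metric.infDist (γ t) Y
  · left
    obtain ⟨n, hn⟩ := exists_nat_ge ℓ
    have hJ := lemJ hC hSC n p q p' q' γ hp' hq' hγ hf hn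
    set P := dist p' q' with hP
    have h1 : Metric.infDist p Y ≥ dist p p' - 1 := by linarith [hp'.2]
    have h2 : Metric.infDist q Y ≥ dist q q' - 1 := by linarith [hq'.2]
    have h3 : ℓ ≤ dist p p' + P + dist q' q := by
      calc ℓ ≤ dist p q' + dist q' q := dist_triangle _ _ _
        _ ≤ (dist p p' + dist p' q') + dist q' q := by linarith [dist_triangle p p' q']
    have h4 : ℓ - (Metric.infDist p Y - 1) - (Metric.infDist q Y - 1) ≤ P + 4 := by
      have := dist_comm q' q
      linarith
    have h5 : max 0 (ℓ - (Metric.infDist p Y - 1) - (Metric.infDist q Y - 1)) ≤ P + 4 := by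
      refine max_le ?_ h4
      positivity
    linarith
  · right
    push_neg at hf
    obtain ⟨t, ht, hft⟩ := hf
    set m := γ t with hm
    have hpm : dist p m = t := by
      have := hγ.2.2 0 ⟨le_refl _, hℓ0⟩ t ht
      rw [hγ.1] at this
      rw [this, abs_of_nonpos (by linarith [ht.1])]; ring
    have hmq : dist m q = ℓ - t := by
      have := hγ.2.2 t ht ℓ ⟨hℓ0, le_refl _⟩
      rw [hγ.2.1] at this
      rw [this, abs_of_nonpos (by linarith [ht.2])]; ring
    obtain ⟨w, hw⟩ := proj_nonempty ⟨p', hp'.1⟩ m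
    have hmw : dist m w ≤ 2*C + 5 := by
      have := hw.2
      linarith
    have hA1 := lemA hGeo hC hSC p p' w hp' hw.1
    have hA2 := lemA hGeo hC hSC q q' w hq' hw.1
    have hu1 : dist p w ≤ dist p m + dist m w := dist_triangle _ _ _
    have hu2 : dist q w ≤ dist q m + dist m w := dist_triangle _ _ _
    have hu3 : dist q m = dist m q := dist_comm _ _
    have hu4 : dist p' q' ≤ dist p' w + dist w q' := dist_triangle _ _ _
    have hu5 : dist w q' = dist q' w := dist_comm _ _
    have hu6 : dist q' q = dist q q' := dist_comm _ _
    linarith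

lemma grom_rep {δ : ℝ} (hδ : 0 ≤ δ) (x y w z : X)
    (h : x = y ∨ x = w ∨ x = z ∨ y = w ∨ y = z ∨ w = z) :
    dist x y + dist w z ≤ max (dist x z + dist w y) (dist x w + dist y z) + δ := by
  rcases h with rfl | rfl | rfl | rfl | rfl | rfl
  · linarith [dist_triangle w x z, le_max_left (dist x z + dist w x) (dist x w + dist x z),
      dist_comm w x, dist_self x]
  · linarith [le_max_left (dist x z + dist x y) (dist x x + dist y z),
      dist_self x]
  · linarith [le_max_right (dist x x + dist w y) (dist x w + dist y x),
      dist_comm w x, dist_comm y x, dist_self x]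
  · linarith [le_max_right (dist x z + dist y y) (dist x y + dist y z), dist_self y]
  · linarith [le_max_left (dist x y + dist w y) (dist x w + dist y y), dist_self y]
  · linarith [le_max_left (dist x w + dist w y) (dist x w + dist y w),
      dist_triangle x w y, dist_self w]

section Four

variable (hGeo : IsGeodesicSpace X) (hC : 0 ≤ C) (hSC : IsStronglyContracting C Y)
  (hG4 : Gromov4 C Y)

include hGeo hC hSC hG4

lemma L1x : ∀ o o' a b c : X, o' ∈ coarseProj Y o → a ∈ Y → b ∈ Y → c ∈ Y →
    dist o a + dist b c ≤ max (dist o c + dist b a) (dist o b + dist a c) + (20*C+56) := by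
  intro o o' a b c ho' ha hb hc
  have G := hG4 o' ho'.1 a ha b hb c hc
  have T : dist o a ≤ dist o o' + dist o' a := dist_triangle _ _ _
  have A1 := lemA hGeo hC hSC o o' c ho' hc
  have A2 := lemA hGeo hC hSC o o' b ho' hb
  have M1 := le_max_left (dist o c + dist b a) (dist o b + dist a c)
  have M2 := le_max_right (dist o c + dist b a) (dist o b + dist a c)
  rcases max_cases (dist o' c + dist b a) (dist o' b + dist a c) with ⟨he, _⟩ | ⟨he, _⟩ <;>
    rw [he] at G <;> linarith

lemma L1y : ∀ o o' a b c : X, o' ∈ coarseProj Y o → a ∈ Y → b ∈ Y → c ∈ Y →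
    dist a o + dist b c ≤ max (dist a c + dist b o) (dist a b + dist o c) + (20*C+56) := by
  intro o o' a b c ho' ha hb hc
  have G := hG4 a ha o' ho'.1 b hb c hc
  have T : dist a o ≤ dist a o' + dist o' o := dist_triangle _ _ _
  have c0 : dist o' o = dist o o' := dist_comm _ _
  have A1 := lemA hGeo hC hSC o o' b ho' hb
  have c1 : dist o' b = dist b o' := dist_comm _ _
  have c2 : dist o b = dist b o := dist_comm _ _
  have A2 := lemA hGeo hC hSC o o' c ho' hc
  have M1 := le_max_left (dist a c + dist b o) (dist a b + dist o c)
  have M2 := le_max_right (dist a c + dist b o) (dist a b + dist o c)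
  rcases max_cases (dist a c + dist b o') (dist a b + dist o' c) with ⟨he, _⟩ | ⟨he, _⟩ <;>
    rw [he] at G <;> linarith

lemma L1w : ∀ o o' a b c : X, o' ∈ coarseProj Y o → a ∈ Y → b ∈ Y → c ∈ Y →
    dist a b + dist o c ≤ max (dist a c + dist o b) (dist a o + dist b c) + (20*C+56) := by
  intro o o' a b c ho' ha hb hc
  have G := hG4 a ha b hb o' ho'.1 c hc
  have T : dist o c ≤ dist o o' + dist o' c := dist_triangle _ _ _
  have A1 := lemA hGeo hC hSC o o' b ho' hb
  have A2 := lemA hGeo hC hSC o o' a ho' ha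
  have c1 : dist a o' = dist o' a := dist_comm _ _
  have c2 : dist a o = dist o a := dist_comm _ _
  have M1 := le_max_left (dist a c + dist o b) (dist a o + dist b c)
  have M2 := le_max_right (dist a c + dist o b) (dist a o + dist b c)
  rcases max_cases (dist a c + dist o' b) (dist a o' + dist b c) with ⟨he, _⟩ | ⟨he, _⟩ <;>
    rw [he] at G <;> linarith

lemma L1z : ∀ o o' a b c : X, o' ∈ coarseProj Y o → a ∈ Y → b ∈ Y → c ∈ Y →
    dist a b + dist c o ≤ max (dist a o + dist c b) (dist a c + dist b o) + (20*C+56) := by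
  intro o o' a b c ho' ha hb hc
  have G := hG4 a ha b hb c hc o' ho'.1
  have T : dist c o ≤ dist c o' + dist o' o := dist_triangle _ _ _
  have c0 : dist o' o = dist o o' := dist_comm _ _
  have A1 := lemA hGeo hC hSC o o' a ho' ha
  have c1 : dist a o' = dist o' a := dist_comm _ _
  have c2 : dist a o = dist o a := dist_comm _ _
  have A2 := lemA hGeo hC hSC o o' b ho' hb
  have c3 : dist b o' = dist o' b := dist_comm _ _
  have c4 : dist b o = dist o b := dist_comm _ _
  have M1 := le_max_left (dist a o + dist c b) (dist a c + dist b o)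
  have M2 := le_max_right (dist a o + dist c b) (dist a c + dist b o)
  rcases max_cases (dist a o' + dist c b) (dist a c + dist b o') with ⟨he, _⟩ | ⟨he, _⟩ <;>
    rw [he] at G <;> linarith


lemma L2xy : ∀ u v u' v' : X, u' ∈ coarseProj Y u → v' ∈ coarseProj Y v →
    ∀ a b : X, a ∈ Y → b ∈ Y →
    dist u v + dist a b ≤ max (dist u b + dist a v) (dist u a + dist v b) + (20*C+56) := by
  intro u v u' v' hu' hv' a b ha hb
  have G := hG4 u' hu'.1 v' hv'.1 a ha b hb
  have T1 : dist u v ≤ dist u u' + dist u' v := dist_triangle _ _ _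
  have T2 : dist u' v ≤ dist u' v' + dist v' v := dist_triangle _ _ _
  have c0 : dist v' v = dist v v' := dist_comm _ _
  have A1 := lemA hGeo hC hSC u u' b hu' hb
  have A2 := lemA hGeo hC hSC v v' a hv' ha
  have c1 : dist a v' = dist v' a := dist_comm _ _
  have c2 : dist a v = dist v a := dist_comm _ _
  have A3 := lemA hGeo hC hSC u u' a hu' ha
  have A4 := lemA hGeo hC hSC v v' b hv' hb
  have M1 := le_max_left (dist u b + dist a v) (dist u a + dist v b)
  have M2 := le_max_right (dist u b + dist a v) (dist u a + dist v b)
  rcases max_cases (dist u' b + dist a v') (dist u' a + dist v' b) with ⟨he, _⟩ | ⟨he, _⟩ <;>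
    rw [he] at G <;> linarith

lemma L2wz : ∀ u v u' v' : X, u' ∈ coarseProj Y u → v' ∈ coarseProj Y v →
    ∀ a b : X, a ∈ Y → b ∈ Y →
    dist a b + dist u v ≤ max (dist a v + dist u b) (dist a u + dist b v) + (20*C+56) := by
  intro u v u' v' hu' hv' a b ha hb
  have G := hG4 a ha b hb u' hu'.1 v' hv'.1
  have T1 : dist u v ≤ dist u u' + dist u' v := dist_triangle _ _ _
  have T2 : dist u' v ≤ dist u' v' + dist v' v := dist_triangle _ _ _
  have c0 : dist v' v = dist v v' := dist_comm _ _
  have A1 := lemA hGeo hC hSC v v' a hv' ha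
  have c1 : dist a v' = dist v' a := dist_comm _ _
  have c2 : dist a v = dist v a := dist_comm _ _
  have A2 := lemA hGeo hC hSC u u' b hu' hb
  have A3 := lemA hGeo hC hSC u u' a hu' ha
  have c3 : dist a u' = dist u' a := dist_comm _ _
  have c4 : dist a u = dist u a := dist_comm _ _
  have A4 := lemA hGeo hC hSC v v' b hv' hb
  have c5 : dist b v' = dist v' b := dist_comm _ _
  have c6 : dist b v = dist v b := dist_comm _ _
  have M1 := le_max_left (dist a v + dist u b) (dist a u + dist b v)
  have M2 := le_max_right (dist a v + dist u b) (dist a u + dist b v)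
  rcases max_cases (dist a v' + dist u' b) (dist a u' + dist b v') with ⟨he, _⟩ | ⟨he, _⟩ <;>
    rw [he] at G <;> linarith

lemma L2xw : ∀ u v u' v' : X, u' ∈ coarseProj Y u → v' ∈ coarseProj Y v →
    ∀ a b : X, a ∈ Y → b ∈ Y →
    dist u a + dist v b ≤ max (dist u b + dist v a) (dist u v + dist a b) + (20*C+56) := by
  intro u v u' v' hu' hv' a b ha hb
  have G := hG4 u' hu'.1 a ha v' hv'.1 b hb
  have T1 : dist u a ≤ dist u u' + dist u' a := dist_triangle _ _ _
  have T2 : dist v b ≤ dist v v' + dist v' b := dist_triangle _ _ _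
  have A1 := lemA hGeo hC hSC u u' b hu' hb
  have A2 := lemA hGeo hC hSC v v' a hv' ha
  have M1 := le_max_left (dist u b + dist v a) (dist u v + dist a b)
  have M2 := le_max_right (dist u b + dist v a) (dist u v + dist a b)
  rcases max_cases (dist u' b + dist v' a) (dist u' v' + dist a b) with ⟨he, _⟩ | ⟨he, _⟩ <;>
    rw [he] at G
  · linarith
  · rcases lemB hGeo hC hSC u v u' v' hu' hv' with hB | hB
    · have t1 : dist u' a ≤ dist u' v' + dist v' a := dist_triangle _ _ _
      have t2 : dist v' b ≤ dist v' u' + dist u' b := dist_triangle _ _ _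
      have t3 : dist v' u' = dist u' v' := dist_comm _ _
      linarith
    · have cvv : dist v' v = dist v v' := dist_comm _ _
      linarith

lemma L2xz : ∀ u v u' v' : X, u' ∈ coarseProj Y u → v' ∈ coarseProj Y v →
    ∀ a b : X, a ∈ Y → b ∈ Y →
    dist u a + dist b v ≤ max (dist u v + dist b a) (dist u b + dist a v) + (20*C+56) := by
  intro u v u' v' hu' hv' a b ha hb
  have G := hG4 u' hu'.1 a ha b hb v' hv'.1
  have T1 : dist u a ≤ dist u u' + dist u' a := dist_triangle _ _ _
  have T2 : dist b v ≤ dist b v' + dist v' v := dist_triangle _ _ _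
  have c0 : dist v' v = dist v v' := dist_comm _ _
  have A1 := lemA hGeo hC hSC u u' b hu' hb
  have A2 := lemA hGeo hC hSC v v' a hv' ha
  have c1 : dist a v' = dist v' a := dist_comm _ _
  have c2 : dist a v = dist v a := dist_comm _ _
  have M1 := le_max_left (dist u v + dist b a) (dist u b + dist a v)
  have M2 := le_max_right (dist u v + dist b a) (dist u b + dist a v)
  rcases max_cases (dist u' v' + dist b a) (dist u' b + dist a v') with ⟨he, _⟩ | ⟨he, _⟩ <;>
    rw [he] at G
  · rcases lemB hGeo hC hSC u v u' v' hu' hv' with hB | hB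
    · have t1 : dist u' a ≤ dist u' v' + dist v' a := dist_triangle _ _ _
      have t2 : dist b v' ≤ dist b u' + dist u' v' := dist_triangle _ _ _
      have t3 : dist b u' = dist u' b := dist_comm _ _
      linarith
    · linarith
  · linarith

lemma L2yw : ∀ u v u' v' : X, u' ∈ coarseProj Y u → v' ∈ coarseProj Y v →
    ∀ a b : X, a ∈ Y → b ∈ Y →
    dist a u + dist v b ≤ max (dist a b + dist v u) (dist a v + dist u b) + (20*C+56) := by
  intro u v u' v' hu' hv' a b ha hb
  have G := hG4 a ha u' hu'.1 v' hv'.1 b hb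
  have T1 : dist a u ≤ dist a u' + dist u' u := dist_triangle _ _ _
  have c0 : dist u' u = dist u u' := dist_comm _ _
  have T2 : dist v b ≤ dist v v' + dist v' b := dist_triangle _ _ _
  have A1 := lemA hGeo hC hSC v v' a hv' ha
  have c1 : dist a v' = dist v' a := dist_comm _ _
  have c2 : dist a v = dist v a := dist_comm _ _
  have A2 := lemA hGeo hC hSC u u' b hu' hb
  have c3 : dist v u = dist u v := dist_comm _ _
  have M1 := le_max_left (dist a b + dist v u) (dist a v + dist u b)
  have M2 := le_max_right (dist a b + dist v u) (dist a v + dist u b)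
  rcases max_cases (dist a b + dist v' u') (dist a v' + dist u' b) with ⟨he, _⟩ | ⟨he, _⟩ <;>
    rw [he] at G
  · rcases lemB hGeo hC hSC u v u' v' hu' hv' with hB | hB
    · have t1 : dist a u' ≤ dist a v' + dist v' u' := dist_triangle _ _ _
      have t2 : dist v' b ≤ dist v' u' + dist u' b := dist_triangle _ _ _
      have t3 : dist v' u' = dist u' v' := dist_comm _ _
      linarith
    · have t4 : dist v' u' = dist u' v' := dist_comm _ _
      have cvv : dist v' v = dist v v' := dist_comm _ _
      linarith
  · linarith

lemma L2yz : ∀ u v u' v' : X, u' ∈ coarseProj Y u → v' ∈ coarseProj Y v →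
    ∀ a b : X, a ∈ Y → b ∈ Y →
    dist a u + dist b v ≤ max (dist a v + dist b u) (dist a b + dist u v) + (20*C+56) := by
  intro u v u' v' hu' hv' a b ha hb
  have G := hG4 a ha u' hu'.1 b hb v' hv'.1
  have T1 : dist a u ≤ dist a u' + dist u' u := dist_triangle _ _ _
  have c0 : dist u' u = dist u u' := dist_comm _ _
  have T2 : dist b v ≤ dist b v' + dist v' v := dist_triangle _ _ _
  have c00 : dist v' v = dist v v' := dist_comm _ _
  have A1 := lemA hGeo hC hSC v v' a hv' ha
  have c1 : dist a v' = dist v' a := dist_comm _ _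
  have c2 : dist a v = dist v a := dist_comm _ _
  have A2 := lemA hGeo hC hSC u u' b hu' hb
  have c3 : dist b u' = dist u' b := dist_comm _ _
  have c4 : dist b u = dist u b := dist_comm _ _
  have M1 := le_max_left (dist a v + dist b u) (dist a b + dist u v)
  have M2 := le_max_right (dist a v + dist b u) (dist a b + dist u v)
  rcases max_cases (dist a v' + dist b u') (dist a b + dist u' v') with ⟨he, _⟩ | ⟨he, _⟩ <;>
    rw [he] at G
  · linarith
  · rcases lemB hGeo hC hSC u v u' v' hu' hv' with hB | hB
    · have t1 : dist a u' ≤ dist a v' + dist v' u' := dist_triangle _ _ _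
      have t2 : dist b v' ≤ dist b u' + dist u' v' := dist_triangle _ _ _
      have t3 : dist v' u' = dist u' v' := dist_comm _ _
      linarith
    · linarith

end Four
end H


/-- For all `C ≥ 0` there is `δ ≥ 0` so that, for every geodesic metric space `X`,
every `C`-strongly contracting subset `Y ⊆ X` satisfying Gromov's 4-point condition
with constant `C`, and any two points `x, y ∈ X`, the set `Y ∪ {x, y}` satisfies
Gromov's 4-point condition with constant `δ`. -/
theorem adding_two_points_gromov4 (C : ℝ) (hC : 0 ≤ C) :
    ∃ δ : ℝ, 0 ≤ δ ∧
      ∀ (X : Type u) [MetricSpace X], IsGeodesicSpace X →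
        ∀ Y : Set X, IsStronglyContracting C Y → Gromov4 C Y →
          ∀ x y : X, Gromov4 δ (Y ∪ {x, y}) := by
  refine ⟨20*C + 56, by linarith, ?_⟩
  intro X _ hGeo Y hSC hG4 p q
  rcases Y.eq_empty_or_nonempty with rfl | hY
  · intro x hx y hy w hw z hz
    simp only [Set.empty_union, Set.mem_insert_iff, Set.mem_singleton_iff] at hx hy hw hz
    rcases hx with rfl | rfl <;> rcases hy with rfl | rfl <;> rcases hw with rfl | rfl <;>
      rcases hz with rfl | rfl <;>
      exact grom_rep (by linarith) _ _ _ _ (by simp)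
  · obtain ⟨p', hp'⟩ := proj_nonempty hY p
    obtain ⟨q', hq'⟩ := proj_nonempty hY q
    intro x hx y hy w hw z hz
    simp only [Set.mem_union, Set.mem_insert_iff, Set.mem_singleton_iff] at hx hy hw hz
    rcases hx with hx | rfl | rfl <;> rcases hy with hy | rfl | rfl <;>
      rcases hw with hw | rfl | rfl <;> rcases hz with hz | rfl | rfl <;>
      first
      | exact le_trans (hG4 _ hx _ hy _ hw _ hz) (by linarith)
      | exact grom_rep (by linarith) _ _ _ _ (by simp)
      | exact L1x hGeo hC hSC hG4 _ p' _ _ _ hp' hy hw hz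
      | exact L1x hGeo hC hSC hG4 _ q' _ _ _ hq' hy hw hz
      | exact L1y hGeo hC hSC hG4 _ p' _ _ _ hp' hx hw hz
      | exact L1y hGeo hC hSC hG4 _ q' _ _ _ hq' hx hw hz
      | exact L1w hGeo hC hSC hG4 _ p' _ _ _ hp' hx hy hz
      | exact L1w hGeo hC hSC hG4 _ q' _ _ _ hq' hx hy hz
      | exact L1z hGeo hC hSC hG4 _ p' _ _ _ hp' hx hy hw
      | exact L1z hGeo hC hSC hG4 _ q' _ _ _ hq' hx hy hw
      | exact L2xy hGeo hC hSC hG4 _ _ p' q' hp' hq' _ _ hw hz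
      | exact L2xy hGeo hC hSC hG4 _ _ q' p' hq' hp' _ _ hw hz
      | exact L2wz hGeo hC hSC hG4 _ _ p' q' hp' hq' _ _ hx hy
      | exact L2wz hGeo hC hSC hG4 _ _ q' p' hq' hp' _ _ hx hy
      | exact L2xw hGeo hC hSC hG4 _ _ p' q' hp' hq' _ _ hy hz
      | exact L2xw hGeo hC hSC hG4 _ _ q' p' hq' hp' _ _ hy hz
      | exact L2xz hGeo hC hSC hG4 _ _ p' q' hp' hq' _ _ hy hw
      | exact L2xz hGeo hC hSC hG4 _ _ q' p' hq' hp' _ _ hy hw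
      | exact L2yw hGeo hC hSC hG4 _ _ p' q' hp' hq' _ _ hx hz
      | exact L2yw hGeo hC hSC hG4 _ _ q' p' hq' hp' _ _ hx hz
      | exact L2yz hGeo hC hSC hG4 _ _ p' q' hp' hq' _ _ hx hw
      | exact L2yz hGeo hC hSC hG4 _ _ q' p' hq' hp' _ _ hx hw
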